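/- For any two distinct angles θ_0 ≠ θ_0' in [0, 2π), there is a unique function p in R_1 (trigonometric polynomials of degree at most 2 taking values in [0,1]) with p(θ_0) = p(θ_0') = 0 and max_θ p(θ) = 1, and it has the form p(θ) = c(1 - cos(θ - θ_0))(1 - cos(θ - θ_0')) for a uniquely determined constant c > 0. -/

import Mathlib

open Real

/-- `p` is a real trigonometric polynomial of degree at most 2. -/
def IsTrigPoly2 (p : ℝ → ℝ) : Prop :=
  ∃ c0 c1 s1 c2 s2 : ℝ, ∀ θ : ℝ,
    p θ = c0 + c1 * Real.cos θ + s1 * Real.sin θ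
      + c2 * Real.cos (2 * θ) + s2 * Real.sin (2 * θ)

namespace Stmt5Aux

open Complex Polynomial

lemma ccos (x : ℂ) : Complex.cos x = (Complex.exp (x*I) + (Complex.exp (x*I))⁻¹)/2 := by
  rw [Complex.cos, neg_mul, Complex.exp_neg]

lemma csin (x : ℂ) : Complex.sin x = ((Complex.exp (x*I))⁻¹ - Complex.exp (x*I)) * I / 2 := by
  rw [Complex.sin, neg_mul, Complex.exp_neg]

lemma ccosw (x : ℂ) : Complex.cos x = (Complex.exp (x*I) + Complex.exp (-(x*I)))/2 := by
  rw [Complex.cos, neg_mul]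

lemma csinw (x : ℂ) : Complex.sin x = (Complex.exp (-(x*I)) - Complex.exp (x*I)) * I / 2 := by
  rw [Complex.sin, neg_mul]

lemma cexp2 (x : ℂ) : Complex.exp ((2*x)*I) = Complex.exp (x*I)^2 := by
  rw [show (2*x)*I = x*I + x*I by ring, Complex.exp_add, sq]

lemma cexp2' (x : ℂ) : Complex.exp (-((2*x)*I)) = Complex.exp (-(x*I))^2 := by
  rw [show -((2*x)*I) = -(x*I) + -(x*I) by ring, Complex.exp_add, sq]

/-- evaluation identity : `Q(e^{iθ}) = e^{2iθ} p(θ)` -/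
lemma eval_id (c0 c1 s1 c2 s2 θ : ℝ) :
    ((c2:ℂ)+s2*I)/2 + ((c1:ℂ)+s1*I)/2 * Complex.exp ((θ:ℂ)*I)
      + (c0:ℂ) * Complex.exp ((θ:ℂ)*I)^2 + ((c1:ℂ)-s1*I)/2 * Complex.exp ((θ:ℂ)*I)^3
      + ((c2:ℂ)-s2*I)/2 * Complex.exp ((θ:ℂ)*I)^4
    = Complex.exp ((θ:ℂ)*I)^2 *
      ((c0 + c1 * Real.cos θ + s1 * Real.sin θ + c2 * Real.cos (2*θ) + s2 * Real.sin (2*θ) : ℝ) : ℂ) := by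
  have hz : Complex.exp ((θ:ℂ)*I) ≠ 0 := Complex.exp_ne_zero _
  push_cast
  rw [ccos, csin, ccos, csin, cexp2]
  field_simp
  ring_nf

/-- derivative identity : `Q'(e^{iθ}) = e^{iθ} (2 p(θ) - p'(θ) i)` -/
lemma deriv_id (c0 c1 s1 c2 s2 θ : ℝ) :
    ((c1:ℂ)+s1*I)/2 + 2*(c0:ℂ) * Complex.exp ((θ:ℂ)*I) + 3*(((c1:ℂ)-s1*I)/2) * Complex.exp ((θ:ℂ)*I)^2
      + 4*(((c2:ℂ)-s2*I)/2) * Complex.exp ((θ:ℂ)*I)^3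
    = Complex.exp ((θ:ℂ)*I) *
      (2 * ((c0 + c1 * Real.cos θ + s1 * Real.sin θ + c2 * Real.cos (2*θ) + s2 * Real.sin (2*θ) : ℝ) : ℂ)
        - ((-c1 * Real.sin θ + s1 * Real.cos θ + c2 * (-2 * Real.sin (2*θ)) + s2 * (2 * Real.cos (2*θ)) : ℝ) : ℂ) * I) := by
  have hw : Complex.exp ((θ:ℂ)*I) * Complex.exp (-((θ:ℂ)*I)) = 1 := by
    rw [← Complex.exp_add]; simp
  set z := Complex.exp ((θ:ℂ)*I) with hzdef
  set w := Complex.exp (-((θ:ℂ)*I)) with hwdef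
  push_cast
  rw [ccosw, csinw, ccosw, csinw, cexp2, cexp2']
  linear_combination (-(((c1:ℂ)+s1*I)/2)) * hw
    + (-(z*(((c1:ℂ)/2)*(w-z)+(c2:ℂ)*(w^2-z^2)))) * Complex.I_sq

/-- factor identity : `(z-z₀)² = z z₀ (2 cos(θ-θ₀) - 2)` -/
lemma factor_id (θ θ₀ : ℝ) :
    (Complex.exp ((θ:ℂ)*I) - Complex.exp ((θ₀:ℂ)*I))^2
      = Complex.exp ((θ:ℂ)*I) * Complex.exp ((θ₀:ℂ)*I) *
        (2 * ((Real.cos (θ - θ₀) : ℝ) : ℂ) - 2) := by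
  have hz : Complex.exp ((θ:ℂ)*I) ≠ 0 := Complex.exp_ne_zero _
  have hz0 : Complex.exp ((θ₀:ℂ)*I) ≠ 0 := Complex.exp_ne_zero _
  push_cast
  rw [ccos]
  rw [show ((θ:ℂ) - θ₀)*I = (θ:ℂ)*I - (θ₀:ℂ)*I by ring, Complex.exp_sub]
  field_simp
  ring

/-- a double root gives a square factor -/
lemma sq_dvd (Q : ℂ[X]) (a : ℂ) (h1 : Q.eval a = 0)
    (h2 : (derivative Q).eval a = 0) : (X - C a)^2 ∣ Q := by
  obtain ⟨R, hR⟩ := (dvd_iff_isRoot (p := Q) (a := a)).2 h1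
  have hd : derivative Q = R + (X - C a) * derivative R := by
    rw [hR, derivative_mul]; simp
  have hRa : R.eval a = 0 := by
    have := h2
    rw [hd] at this
    simpa using this
  obtain ⟨S, hS⟩ := (dvd_iff_isRoot (p := R) (a := a)).2 hRa
  exact ⟨S, by rw [hR, hS]; ring⟩

/-- The main uniqueness lemma. -/
lemma unique_form (θ₀ θ₀' θ₁ : ℝ)
    (hz : Complex.exp ((θ₀:ℂ)*I) ≠ Complex.exp ((θ₀':ℂ)*I))
    (p : ℝ → ℝ) (hp : IsTrigPoly2 p) (hnn : ∀ θ, 0 ≤ p θ)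
    (hp0 : p θ₀ = 0) (hp0' : p θ₀' = 0) (hp1 : p θ₁ = 1) :
    ∃ μ : ℝ, μ * ((1 - Real.cos (θ₁ - θ₀)) * (1 - Real.cos (θ₁ - θ₀'))) = 1 ∧
      ∀ θ, p θ = μ * ((1 - Real.cos (θ - θ₀)) * (1 - Real.cos (θ - θ₀'))) := by
  obtain ⟨c0, c1, s1, c2, s2, hpdef⟩ := hp
  -- the derivative of p
  have hder : ∀ x : ℝ, HasDerivAt p
      (-c1 * Real.sin x + s1 * Real.cos x + c2 * (-2 * Real.sin (2*x)) + s2 * (2 * Real.cos (2*x))) x := by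
    intro x
    have hfun : p = fun y => c0 + c1 * Real.cos y + s1 * Real.sin y
        + c2 * Real.cos (2 * y) + s2 * Real.sin (2 * y) := funext hpdef
    rw [hfun]
    have h2x : HasDerivAt (fun y : ℝ => 2 * y) 2 x := by
      simpa using (hasDerivAt_id x).const_mul 2
    have hcos2 : HasDerivAt (fun y : ℝ => Real.cos (2*y)) (-Real.sin (2*x) * 2) x :=
      (Real.hasDerivAt_cos (2*x)).comp x h2x
    have hsin2 : HasDerivAt (fun y : ℝ => Real.sin (2*y)) (Real.cos (2*x) * 2) x :=
      (Real.hasDerivAt_sin (2*x)).comp x h2x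
    have := (((((hasDerivAt_const x c0).add
      ((Real.hasDerivAt_cos x).const_mul c1)).add
      ((Real.hasDerivAt_sin x).const_mul s1)).add
      (hcos2.const_mul c2)).add (hsin2.const_mul s2))
    refine this.congr_deriv ?_
    ring
  -- derivative vanishes at global minima
  have hE : ∀ x : ℝ, p x = 0 →
      -c1 * Real.sin x + s1 * Real.cos x + c2 * (-2 * Real.sin (2*x)) + s2 * (2 * Real.cos (2*x)) = 0 := by
    intro x hx
    have hmin : IsLocalMin p x := by
      apply Filter.Eventually.of_forall
      intro y
      rw [hx]; exact hnn y
    exact hmin.hasDerivAt_eq_zero (hder x)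
  have hE0 := hE θ₀ hp0
  have hE0' := hE θ₀' hp0'
  -- the complex polynomial Q
  set b0 : ℂ := ((c2:ℂ)+s2*I)/2 with hb0
  set b1 : ℂ := ((c1:ℂ)+s1*I)/2 with hb1
  set b2 : ℂ := (c0:ℂ) with hb2
  set b3 : ℂ := ((c1:ℂ)-s1*I)/2 with hb3
  set b4 : ℂ := ((c2:ℂ)-s2*I)/2 with hb4
  set Q : ℂ[X] := C b0 + C b1 * X + C b2 * X^2 + C b3 * X^3 + C b4 * X^4 with hQ
  have hQeval : ∀ θ : ℝ, Q.eval (Complex.exp ((θ:ℂ)*I))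
      = Complex.exp ((θ:ℂ)*I)^2 * ((p θ : ℝ) : ℂ) := by
    intro θ
    have := eval_id c0 c1 s1 c2 s2 θ
    rw [hpdef θ]
    push_cast at this ⊢
    simpa [hQ, hb0, hb1, hb2, hb3, hb4] using this
  have hQder : derivative Q = C b1 + C (2*b2) * X + C (3*b3) * X^2 + C (4*b4) * X^3 := by
    rw [hQ]
    simp [derivative_pow]
    ring
  have hQderEval : ∀ θ : ℝ, (derivative Q).eval (Complex.exp ((θ:ℂ)*I))
      = Complex.exp ((θ:ℂ)*I) *
        (2 * ((p θ : ℝ) : ℂ)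
          - ((-c1 * Real.sin θ + s1 * Real.cos θ + c2 * (-2 * Real.sin (2*θ)) + s2 * (2 * Real.cos (2*θ)) : ℝ) : ℂ) * I) := by
    intro θ
    have := deriv_id c0 c1 s1 c2 s2 θ
    rw [hpdef θ, hQder]
    push_cast at this ⊢
    simpa [hb1, hb2, hb3, hb4] using this
  set z0 : ℂ := Complex.exp ((θ₀:ℂ)*I) with hz0
  set z0' : ℂ := Complex.exp ((θ₀':ℂ)*I) with hz0'
  -- double roots
  have hQ0 : Q.eval z0 = 0 := by rw [hQeval θ₀, hp0]; simp
  have hQ0' : Q.eval z0' = 0 := by rw [hQeval θ₀', hp0']; simp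
  have hQd0 : (derivative Q).eval z0 = 0 := by
    rw [hQderEval θ₀, hp0, hE0]; simp
  have hQd0' : (derivative Q).eval z0' = 0 := by
    rw [hQderEval θ₀', hp0', hE0']; simp
  have hdvd1 : (X - C z0)^2 ∣ Q := sq_dvd Q z0 hQ0 hQd0
  have hdvd2 : (X - C z0')^2 ∣ Q := sq_dvd Q z0' hQ0' hQd0'
  have hcop : IsCoprime ((X - C z0)^2) ((X - C z0')^2) :=
    (Polynomial.isCoprime_X_sub_C_of_isUnit_sub ((sub_ne_zero.2 hz).isUnit)).pow
  have hdvd : ((X - C z0) * (X - C z0'))^2 ∣ Q := by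
    rw [mul_pow]
    exact hcop.mul_dvd hdvd1 hdvd2
  obtain ⟨R, hQR⟩ := hdvd
  -- Q is not zero
  have hQne : Q ≠ 0 := by
    intro h
    have := hQeval θ₁
    rw [h, hp1] at this
    simp at this
    exact pow_ne_zero 2 (Complex.exp_ne_zero _) this.symm
  have hRne : R ≠ 0 := by rintro rfl; simp at hQR; exact hQne hQR
  -- degree count
  have hmonic : (((X - C z0) * (X - C z0'))^2).Monic :=
    ((monic_X_sub_C z0).mul (monic_X_sub_C z0')).pow 2
  have hdegD : (((X - C z0) * (X - C z0'))^2).natDegree = 4 := by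
    rw [natDegree_pow, natDegree_mul (X_sub_C_ne_zero z0) (X_sub_C_ne_zero z0')]
    simp
  have hdegQ : Q.natDegree ≤ 4 := by
    rw [hQ]
    compute_degree
  have hdegR : R.natDegree = 0 := by
    have := natDegree_mul (hmonic.ne_zero) hRne
    rw [← hQR, hdegD] at this
    omega
  obtain ⟨r, rfl⟩ := natDegree_eq_zero.1 hdegR
  -- the pointwise identity
  have key : ∀ θ : ℝ, ((p θ : ℝ) : ℂ)
      = (4 * r * z0 * z0') * ((1 - Real.cos (θ - θ₀) : ℝ) : ℂ) * ((1 - Real.cos (θ - θ₀') : ℝ) : ℂ) := by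
    intro θ
    set z : ℂ := Complex.exp ((θ:ℂ)*I) with hzz
    have hzne : z ≠ 0 := Complex.exp_ne_zero _
    have h1 : z^2 * ((p θ : ℝ) : ℂ) = ((z - z0) * (z - z0'))^2 * r := by
      rw [← hQeval θ, hQR]
      simp
      exact Or.inl rfl
    have h2 : ((z - z0) * (z - z0'))^2
        = z^2 * z0 * z0' * ((2 * ((Real.cos (θ - θ₀) : ℝ) : ℂ) - 2) * (2 * ((Real.cos (θ - θ₀') : ℝ) : ℂ) - 2)) := by
      rw [mul_pow, factor_id θ θ₀, factor_id θ θ₀']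
      ring
    have h3 : z^2 * ((p θ : ℝ) : ℂ)
        = z^2 * ((4 * r * z0 * z0') * ((1 - Real.cos (θ - θ₀) : ℝ) : ℂ) * ((1 - Real.cos (θ - θ₀') : ℝ) : ℂ)) := by
      rw [h1, h2]
      push_cast
      ring
    exact mul_left_cancel₀ (pow_ne_zero 2 hzne) h3
  -- the constant is real
  set F : ℝ → ℝ := fun θ => (1 - Real.cos (θ - θ₀)) * (1 - Real.cos (θ - θ₀')) with hF
  have hF1 : ((F θ₁ : ℝ) : ℂ) * (4 * r * z0 * z0') = 1 := by
    have h := key θ₁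
    rw [hp1] at h
    simp only [hF, Complex.ofReal_mul, Complex.ofReal_one] at h ⊢
    linear_combination -h
  have hF1ne : F θ₁ ≠ 0 := by
    intro h0
    rw [h0] at hF1
    simp at hF1
  have hlam : 4 * r * z0 * z0' = (((F θ₁)⁻¹ : ℝ) : ℂ) := by
    rw [Complex.ofReal_inv]
    exact eq_inv_of_mul_eq_one_left (by linear_combination hF1)
  refine ⟨(F θ₁)⁻¹, ?_, ?_⟩
  · exact inv_mul_cancel₀ hF1ne
  · intro θ
    have h := key θ
    rw [hlam] at h
    have h2 : p θ = (F θ₁)⁻¹ * (1 - Real.cos (θ - θ₀)) * (1 - Real.cos (θ - θ₀')) := by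
      exact_mod_cast h
    rw [h2]; ring

end Stmt5Aux

/-- For distinct angles `θ₀ ≠ θ₀'` in `[0, 2π)`, there is a unique `p ∈ R₁` with
`p(θ₀) = p(θ₀') = 0` and `max_θ p(θ) = 1`, and it has the form
`p(θ) = c (1 - cos(θ - θ₀))(1 - cos(θ - θ₀'))` for a uniquely determined `c > 0`. -/
theorem stmt5 (θ₀ θ₀' : ℝ) (h₀ : θ₀ ∈ Set.Ico (0 : ℝ) (2 * Real.pi))
    (h₀' : θ₀' ∈ Set.Ico (0 : ℝ) (2 * Real.pi)) (hne : θ₀ ≠ θ₀') :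
    ∃ c : ℝ, 0 < c ∧
      (∀ θ : ℝ, c * (1 - Real.cos (θ - θ₀)) * (1 - Real.cos (θ - θ₀')) ∈ Set.Icc (0 : ℝ) 1) ∧
      (∃ θ₁ : ℝ, c * (1 - Real.cos (θ₁ - θ₀)) * (1 - Real.cos (θ₁ - θ₀')) = 1) ∧
      (∀ p : ℝ → ℝ, IsTrigPoly2 p → (∀ θ : ℝ, p θ ∈ Set.Icc (0 : ℝ) 1) →
        p θ₀ = 0 → p θ₀' = 0 → (∃ θ₁ : ℝ, p θ₁ = 1) →
        ∀ θ : ℝ, p θ = c * (1 - Real.cos (θ - θ₀)) * (1 - Real.cos (θ - θ₀'))) ∧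
      (∀ c' : ℝ, 0 < c' →
        (∃ θ₁ : ℝ, c' * (1 - Real.cos (θ₁ - θ₀)) * (1 - Real.cos (θ₁ - θ₀')) = 1) →
        (∀ θ : ℝ, c' * (1 - Real.cos (θ - θ₀)) * (1 - Real.cos (θ - θ₀')) ≤ 1) →
        c' = c) := by

  have hπ : (0:ℝ) < 2 * Real.pi := by positivity
  set F : ℝ → ℝ := fun θ => (1 - Real.cos (θ - θ₀)) * (1 - Real.cos (θ - θ₀')) with hF
  have hFnn : ∀ θ, 0 ≤ F θ := fun θ =>
    mul_nonneg (by nlinarith [Real.cos_le_one (θ - θ₀)]) (by nlinarith [Real.cos_le_one (θ - θ₀')])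
  have hFcont : Continuous F := by fun_prop
  have hper : Function.Periodic F (2 * Real.pi) := by
    intro x
    simp only [hF]
    rw [show x + 2*Real.pi - θ₀ = (x - θ₀) + 2*Real.pi by ring,
        show x + 2*Real.pi - θ₀' = (x - θ₀') + 2*Real.pi by ring,
        Real.cos_add_two_pi, Real.cos_add_two_pi]
  obtain ⟨θs, hθsmem, hθsmax⟩ := (isCompact_Icc (a := (0:ℝ)) (b := 2*Real.pi)).exists_isMaxOn
    (Set.nonempty_Icc.2 (by linarith)) hFcont.continuousOn
  have hmax : ∀ θ, F θ ≤ F θs := by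
    intro θ
    obtain ⟨y, hy, hyeq⟩ := hper.exists_mem_Ico₀ hπ θ
    rw [hyeq]
    exact hθsmax (Set.mem_Icc.2 ⟨hy.1, hy.2.le⟩)
  set M := F θs with hM
  have hM0 : 0 < M := by
    rcases lt_or_ge 0 M with h | h
    · exact h
    · exfalso
      have hz1 : F (θ₀ + Real.pi) = 0 := le_antisymm (le_trans (hmax _) h) (hFnn _)
      have hz2 : F (θ₀ + Real.pi/2) = 0 := le_antisymm (le_trans (hmax _) h) (hFnn _)
      have e1 : Real.cos (θ₀ + Real.pi - θ₀') = 1 := by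
        simp only [hF] at hz1
        rw [show θ₀ + Real.pi - θ₀ = Real.pi by ring, Real.cos_pi] at hz1
        nlinarith [hz1]
      have e2 : Real.cos (θ₀ + Real.pi/2 - θ₀') = 1 := by
        simp only [hF] at hz2
        rw [show θ₀ + Real.pi/2 - θ₀ = Real.pi/2 by ring, Real.cos_pi_div_two] at hz2
        nlinarith [hz2]
      obtain ⟨n, hn⟩ := (Real.cos_eq_one_iff _).1 e1
      obtain ⟨m, hm⟩ := (Real.cos_eq_one_iff _).1 e2
      have hd : ((n - m : ℤ) : ℝ) * (2*Real.pi) = Real.pi/2 := by push_cast; linarith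
      have h4 : ((4 * (n - m) : ℤ) : ℝ) * Real.pi = 1 * Real.pi := by push_cast; linarith
      have h5 : (4 * (n - m) : ℤ) = 1 := by
        exact_mod_cast mul_right_cancel₀ Real.pi_ne_zero h4
      omega
  -- distinctness of the exponentials
  have hz : Complex.exp ((θ₀:ℂ)*Complex.I) ≠ Complex.exp ((θ₀':ℂ)*Complex.I) := by
    intro h
    obtain ⟨n, hn⟩ := Complex.exp_eq_exp_iff_exists_int.1 h
    have hre : θ₀ = θ₀' + n * (2*Real.pi) := by
      have := congrArg Complex.im hn
      simpa using this
    have h1 : (n:ℝ) < 1 := by nlinarith [h₀.1, h₀.2, h₀'.1, h₀'.2]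
    have h2 : (-1:ℝ) < (n:ℝ) := by nlinarith [h₀.1, h₀.2, h₀'.1, h₀'.2]
    have hn0 : n = 0 := by
      have h1' : n < 1 := by exact_mod_cast h1
      have h2' : -1 < n := by exact_mod_cast h2
      omega
    rw [hn0] at hre
    simp at hre
    exact hne hre
  refine ⟨M⁻¹, inv_pos.2 hM0, ?_, ?_, ?_, ?_⟩
  · intro θ
    constructor
    · have := hFnn θ
      simp only [hF] at this
      have h1 : (0:ℝ) ≤ M⁻¹ := (inv_pos.2 hM0).le
      nlinarith [this]
    · have h1 := hmax θ
      simp only [hF, hM] at h1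
      rw [mul_assoc]
      calc M⁻¹ * ((1 - Real.cos (θ - θ₀)) * (1 - Real.cos (θ - θ₀')))
          ≤ M⁻¹ * M := by
            apply mul_le_mul_of_nonneg_left _ (inv_pos.2 hM0).le
            exact hmax θ
        _ = 1 := inv_mul_cancel₀ hM0.ne'
  · exact ⟨θs, by rw [mul_assoc]; exact inv_mul_cancel₀ hM0.ne'⟩
  · intro p hp hIcc hp0 hp0' ⟨θ₁, hp1⟩
    obtain ⟨μ, hμ1, hμeq⟩ := Stmt5Aux.unique_form θ₀ θ₀' θ₁ hz p hp
      (fun θ => (hIcc θ).1) hp0 hp0' hp1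
    have hFθ₁pos : 0 < F θ₁ := by
      rcases (hFnn θ₁).lt_or_eq with h | h
      · exact h
      · exfalso
        have hμ1' : μ * F θ₁ = 1 := hμ1
        rw [← h] at hμ1'
        simp at hμ1'
    have hμpos : 0 < μ := by
      have : μ * F θ₁ = 1 := hμ1
      nlinarith
    have hub : μ * M ≤ 1 := by
      have := (hIcc θs).2
      rw [hμeq θs] at this
      exact this
    have hlb : 1 ≤ μ * M := by
      have hFle : F θ₁ ≤ M := hmax θ₁
      have : μ * F θ₁ ≤ μ * M := mul_le_mul_of_nonneg_left hFle hμpos.le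
      rw [hμ1] at this
      exact this
    have hμM : μ * M = 1 := le_antisymm hub hlb
    have hμeqM : μ = M⁻¹ := eq_inv_of_mul_eq_one_left hμM
    intro θ
    rw [hμeq θ, hμeqM, mul_assoc]
  · rintro c' hc' ⟨θ₁, h1⟩ hle
    have hub : c' * M ≤ 1 := by
      have := hle θs
      rw [mul_assoc] at this
      exact this
    have hlb : 1 ≤ c' * M := by
      have hFle : F θ₁ ≤ M := hmax θ₁
      have h2 : c' * F θ₁ ≤ c' * M := mul_le_mul_of_nonneg_left hFle hc'.le
      have h3 : c' * F θ₁ = 1 := by rw [← h1]; ring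
      linarith
    have : c' * M = 1 := le_antisymm hub hlb
    exact eq_inv_of_mul_eq_one_left this
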